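/- Suppose d_1^X : X_1 → X_0 admits an n-kernel, and for some 1 ≤ m ≤ n there is a sequence X_m → X_{m−1} → ⋯ → X_1 → X_0 with differentials d_m^X, …, d_1^X such that d_i^X is a weak kernel of d_{i−1}^X for 2 ≤ i ≤ m. Then d_m^X admits an (n+1−m)-kernel; i.e., the sequence can be completed to a left n-exact sequence. -/

import Mathlib

open CategoryTheory CategoryTheory.Limits ZeroObject

universe v u

/-- `g : W ⟶ A` is a weak kernel of `f : A ⟶ B`. -/
def IsWeakKernel {C : Type u} [Category.{v} C] [Preadditive C] {W A B : C} (g : W ⟶ A) (f : A ⟶ B) :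
    Prop :=
  g ≫ f = 0 ∧ ∀ ⦃T : C⦄ (t : T ⟶ A), t ≫ f = 0 → ∃ u : T ⟶ W, u ≫ g = t

/-- `f : A ⟶ B` admits an n-kernel (`n ≥ 1`). -/
def HasNKernel {C : Type u} [Category.{v} C] [Preadditive C] (n : ℕ) {A B : C}
    (f : A ⟶ B) : Prop :=
  ∃ (K : ℕ → C) (δ : ∀ i, K (i + 1) ⟶ K i) (e : K 0 ≅ A),
    (∀ c : Cᵒᵖ, Function.Exact ⇑((preadditiveYoneda.map (δ 0 ≫ e.hom)).app c)
      ⇑((preadditiveYoneda.map f).app c)) ∧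
    (∀ i, i + 2 ≤ n → ∀ c : Cᵒᵖ, Function.Exact
      ⇑((preadditiveYoneda.map (δ (i + 1))).app c)
      ⇑((preadditiveYoneda.map (δ i)).app c)) ∧
    (∀ c : Cᵒᵖ, Function.Injective ⇑((preadditiveYoneda.map (δ (n - 1))).app c))

section Aux

variable {C : Type u} [Category.{v} C] [Preadditive C]

lemma yoneda_exact_iff {X Y Z : C} (g : X ⟶ Y) (f : Y ⟶ Z) :
    (∀ c : Cᵒᵖ, Function.Exact ⇑((preadditiveYoneda.map g).app c)
      ⇑((preadditiveYoneda.map f).app c))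
    ↔ ∀ (T : C) (t : T ⟶ Y), t ≫ f = 0 ↔ ∃ s : T ⟶ X, s ≫ g = t := by
  constructor
  · intro H T t
    exact H (Opposite.op T) t
  · intro H c t
    exact H c.unop t

lemma yoneda_inj_iff {X Y : C} (g : X ⟶ Y) :
    (∀ c : Cᵒᵖ, Function.Injective ⇑((preadditiveYoneda.map g).app c)) ↔
      ∀ (T : C) (t : T ⟶ X), t ≫ g = 0 → t = 0 := by
  constructor
  · intro H T t ht
    exact (injective_iff_map_eq_zero _).1 (H (Opposite.op T)) t ht
  · intro H c
    rw [injective_iff_map_eq_zero]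
    intro t ht
    exact H c.unop t ht

lemma step {C : Type u} [Category.{v} C] [Preadditive C]
    [HasZeroObject C] [HasBinaryBiproducts C] [IsIdempotentComplete C]
    {A B W : C} (n2 : ℕ) {f : A ⟶ B} {h : W ⟶ A}
    (hf : HasNKernel (n2 + 2) f) (hw : IsWeakKernel h f) : HasNKernel (n2 + 1) h := by
  obtain ⟨K, δ, e, hE0', hE', hInj'⟩ := hf
  have hE0 : ∀ (T : C) (t : T ⟶ A), t ≫ f = 0 ↔ ∃ s : T ⟶ K 1, s ≫ (δ 0 ≫ e.hom) = t :=
    (yoneda_exact_iff _ _).1 hE0'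
  have hE : ∀ i, i + 2 ≤ n2 + 2 → ∀ (T : C) (t : T ⟶ K (i + 1)),
      t ≫ δ i = 0 ↔ ∃ s : T ⟶ K (i + 2), s ≫ δ (i + 1) = t :=
    fun i hi => (yoneda_exact_iff _ _).1 (hE' i hi)
  have hInj : ∀ (T : C) (t : T ⟶ K (n2 + 2)), t ≫ δ (n2 + 1) = 0 → t = 0 :=
    (yoneda_inj_iff _).1 hInj'
  have hGf : (δ 0 ≫ e.hom) ≫ f = 0 := (hE0 _ _).2 ⟨𝟙 _, Category.id_comp _⟩
  obtain ⟨u, hu⟩ := hw.2 (δ 0 ≫ e.hom) hGf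
  obtain ⟨v, hv⟩ := (hE0 _ h).1 hw.1
  have hδ10 : δ 1 ≫ δ 0 = 0 := (hE 0 (by omega) _ (δ 1)).2 ⟨𝟙 _, Category.id_comp _⟩
  have hvδ0 : v ≫ δ 0 = h ≫ e.inv := by
    rw [← hv, Category.assoc, Category.assoc, Iso.hom_inv_id, Category.comp_id]
  have huv0 : (𝟙 (K 1) - u ≫ v) ≫ δ 0 = 0 := by
    have h2 : u ≫ v ≫ δ 0 = δ 0 := by
      rw [hvδ0, ← Category.assoc, hu, Category.assoc, Iso.hom_inv_id, Category.comp_id]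
    rw [Preadditive.sub_comp, Category.id_comp, Category.assoc, h2, sub_self]
  obtain ⟨σ, hσ0⟩ := (hE 0 (by omega) _ _).1 huv0
  have hσ : σ ≫ δ 1 = 𝟙 (K 1) - u ≫ v := hσ0
  clear hσ0
  -- the basic weak kernel of h
  set w : K 2 ⊞ W ⟶ W := biprod.desc (δ 1 ≫ u) (𝟙 W - v ≫ u) with hwdef
  have hwcomp : ∀ {T : C} (a : T ⟶ K 2) (b : T ⟶ W),
      biprod.lift a b ≫ w = a ≫ δ 1 ≫ u + b ≫ (𝟙 W - v ≫ u) := by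
    intro T a b
    rw [hwdef, biprod.lift_desc]
  have hδ1G : δ 1 ≫ δ 0 ≫ e.hom = 0 := by rw [← Category.assoc, hδ10, zero_comp]
  have hwh : w ≫ h = 0 := by
    apply biprod.hom_ext'
    · rw [hwdef, biprod.inl_desc_assoc, comp_zero, Category.assoc, hu, hδ1G]
    · rw [hwdef, biprod.inr_desc_assoc, comp_zero, Preadditive.sub_comp, Category.id_comp,
        Category.assoc, hu, hv, sub_self]
  have hwfact : ∀ (T : C) (t : T ⟶ W), t ≫ h = 0 → ∃ s : T ⟶ K 2 ⊞ W, s ≫ w = t := by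
    intro T t ht
    have h1 : (t ≫ v) ≫ δ 0 = 0 := by
      rw [Category.assoc, hvδ0, ← Category.assoc, ht, zero_comp]
    obtain ⟨s, hs⟩ := (hE 0 (by omega) _ _).1 h1
    have hs' : s ≫ δ 1 = t ≫ v := hs
    refine ⟨biprod.lift s t, ?_⟩
    rw [hwcomp, ← Category.assoc, hs', Preadditive.comp_sub, Category.comp_id, Category.assoc]
    abel
  -- key decomposition for elements killed by w
  have key1 : ∀ (T : C) (a : T ⟶ K 2) (b : T ⟶ W),
      a ≫ δ 1 ≫ u + b ≫ (𝟙 W - v ≫ u) = 0 →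
      (b ≫ v - a ≫ δ 1) ≫ u = b ∧ (a + (b ≫ v - a ≫ δ 1) ≫ σ) ≫ δ 1 = 0 := by
    intro T a b hab
    simp only [Preadditive.comp_sub, Category.comp_id] at hab
    have hb : a ≫ δ 1 ≫ u = b ≫ v ≫ u - b := by
      linear_combination (norm := abel_nf) hab
    have hbu : (b ≫ v - a ≫ δ 1) ≫ u = b := by
      rw [Preadditive.sub_comp, Category.assoc, Category.assoc, hb]
      abel
    refine ⟨hbu, ?_⟩
    have hcuv : (b ≫ v - a ≫ δ 1) ≫ u ≫ v = b ≫ v := by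
      rw [← Category.assoc, hbu]
    rw [Preadditive.add_comp, Category.assoc, hσ, Preadditive.comp_sub, Category.comp_id, hcuv]
    abel
  have hrw0 : (biprod.lift (-σ) u : K 1 ⟶ K 2 ⊞ W) ≫ w = 0 := by
    rw [hwcomp, Preadditive.neg_comp, ← Category.assoc, hσ, Preadditive.comp_sub,
      Category.comp_id, Preadditive.sub_comp, Category.id_comp, ← Category.assoc u v u]
    abel
  rcases n2 with _ | n3
  · -- n = 2 : split off an honest kernel using idempotent completeness
    set r : K 1 ⟶ K 2 ⊞ W := biprod.lift (-σ) u with hrdef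
    set ρ : K 2 ⊞ W ⟶ K 1 := biprod.desc (-δ 1) v with hρdef
    have hrρ : r ≫ ρ = 𝟙 (K 1) := by
      rw [hrdef, hρdef, biprod.lift_desc, Preadditive.neg_comp, Preadditive.comp_neg, neg_neg,
        hσ]
      abel
    have hππ : (𝟙 (K 2 ⊞ W) - ρ ≫ r) ≫ (𝟙 (K 2 ⊞ W) - ρ ≫ r) = 𝟙 (K 2 ⊞ W) - ρ ≫ r := by
      have h5 : (ρ ≫ r) ≫ ρ ≫ r = ρ ≫ r := by
        rw [Category.assoc, ← Category.assoc r ρ r, hrρ, Category.id_comp]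
      simp only [Preadditive.sub_comp, Preadditive.comp_sub, Category.id_comp, Category.comp_id,
        h5]
      abel
    obtain ⟨V, i, q, hiq, hqi⟩ := IsIdempotentComplete.idempotents_split _ _ hππ
    have hrq : r ≫ q = 0 := by
      have h1 : (r ≫ q) ≫ i = 0 := by
        rw [Category.assoc, hqi, Preadditive.comp_sub, Category.comp_id, ← Category.assoc, hrρ,
          Category.id_comp, sub_self]
      calc r ≫ q = ((r ≫ q) ≫ i) ≫ q := by rw [Category.assoc, hiq, Category.comp_id]
      _ = 0 := by rw [h1, zero_comp]
    refine ⟨fun j => match j with | 0 => W | 1 => V | _ + 2 => 0,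
      fun j => match j with | 0 => i ≫ w | 1 => 0 | _ + 2 => 0, Iso.refl W, ?_, ?_, ?_⟩
    · rw [yoneda_exact_iff]
      intro T t
      simp only [Iso.refl_hom, Category.comp_id]
      constructor
      · intro ht
        obtain ⟨s, hs⟩ := hwfact T t ht
        refine ⟨s ≫ q, ?_⟩
        have h2 : s ≫ q ≫ i ≫ w = t := by
          have h3 : q ≫ i ≫ w = (𝟙 (K 2 ⊞ W) - ρ ≫ r) ≫ w := by
            rw [← Category.assoc, hqi]
          rw [h3, Preadditive.sub_comp, Preadditive.comp_sub, Category.id_comp, Category.assoc,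
            hrw0, comp_zero, comp_zero, sub_zero, hs]
        simpa only [Category.assoc] using h2
      · rintro ⟨s, rfl⟩
        rw [Category.assoc, Category.assoc, hwh, comp_zero, comp_zero]
    · intro i hi
      omega
    · rw [yoneda_inj_iff]
      intro T t ht
      have ht' : (t ≫ i) ≫ w = 0 := by
        rw [Category.assoc]; exact ht
      have hti : t ≫ i = biprod.lift (t ≫ i ≫ biprod.fst) (t ≫ i ≫ biprod.snd) := by
        apply biprod.hom_ext <;> simp
      have hab : (t ≫ i ≫ biprod.fst) ≫ δ 1 ≫ u
          + (t ≫ i ≫ biprod.snd) ≫ (𝟙 W - v ≫ u) = 0 := by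
        rw [← hwcomp, ← hti]
        exact ht'
      obtain ⟨hcu, hcσ⟩ := key1 _ _ _ hab
      have ha : t ≫ i ≫ biprod.fst
          = -(((t ≫ i ≫ biprod.snd) ≫ v - (t ≫ i ≫ biprod.fst) ≫ δ 1) ≫ σ) := by
        have h3 := hInj _ _ hcσ
        rw [← sub_eq_zero, sub_neg_eq_add]
        exact h3
      have hti2 : t ≫ i = ((t ≫ i ≫ biprod.snd) ≫ v - (t ≫ i ≫ biprod.fst) ≫ δ 1) ≫ r := by
        rw [hrdef]
        apply biprod.hom_ext
        · rw [Category.assoc, Category.assoc, biprod.lift_fst, Preadditive.comp_neg, ← ha]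
        · rw [Category.assoc, Category.assoc, biprod.lift_snd, hcu]
      calc t = (t ≫ i) ≫ q := by rw [Category.assoc, hiq]; exact (Category.comp_id _).symm
      _ = 0 := by rw [hti2, Category.assoc, hrq, comp_zero]
  · -- n ≥ 3 : explicit tower
    set d1 : K 3 ⊞ K 1 ⟶ K 2 ⊞ W := biprod.desc (biprod.lift (δ 2) 0) (biprod.lift (-σ) u)
      with hd1def
    have hδ21 : δ 2 ≫ δ 1 = 0 := (hE 1 (by omega) _ (δ 2)).2 ⟨𝟙 _, Category.id_comp _⟩
    have hd1comp : ∀ {T : C} (a : T ⟶ K 3) (b : T ⟶ K 1),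
        biprod.lift a b ≫ d1 = biprod.lift (a ≫ δ 2 - b ≫ σ) (b ≫ u) := by
      intro T a b
      rw [hd1def, biprod.lift_desc]
      apply biprod.hom_ext
      · rw [Preadditive.add_comp, Category.assoc, Category.assoc, biprod.lift_fst,
          biprod.lift_fst, biprod.lift_fst, Preadditive.comp_neg]
        abel
      · rw [Preadditive.add_comp, Category.assoc, Category.assoc, biprod.lift_snd,
          biprod.lift_snd, biprod.lift_snd, comp_zero, zero_add]
    have hd1w : d1 ≫ w = 0 := by
      apply biprod.hom_ext'
      · rw [hd1def, biprod.inl_desc_assoc, comp_zero, hwcomp, ← Category.assoc, hδ21, zero_comp,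
          zero_comp, add_zero]
      · rw [hd1def, biprod.inr_desc_assoc, comp_zero, hrw0]
    -- kernel of d1
    have hd1ker : ∀ (T : C) (a : T ⟶ K 3) (b : T ⟶ K 1), biprod.lift a b ≫ d1 = 0 →
        b = 0 ∧ a ≫ δ 2 = 0 := by
      intro T a b ht
      rw [hd1comp] at ht
      have h1 : a ≫ δ 2 - b ≫ σ = 0 := by
        have := congrArg (fun z => z ≫ biprod.fst) ht
        simpa using this
      have h2 : b ≫ u = 0 := by
        have := congrArg (fun z => z ≫ biprod.snd) ht
        simpa using this
      have h3 : b ≫ σ = a ≫ δ 2 := by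
        rw [← sub_eq_zero, ← neg_sub, neg_eq_zero, h1]
      have hb0 : b = 0 := by
        have h4 : b ≫ σ ≫ δ 1 = b := by
          rw [hσ, Preadditive.comp_sub, Category.comp_id, ← Category.assoc, h2, zero_comp,
            sub_zero]
        rw [← h4, ← Category.assoc, h3, Category.assoc, hδ21, comp_zero]
      refine ⟨hb0, ?_⟩
      rw [← h1, hb0, zero_comp, sub_zero]
    refine ⟨fun j => match j with | 0 => W | 1 => K 2 ⊞ W | 2 => K 3 ⊞ K 1 | j + 3 => K (j + 4),
      fun j => match j with
        | 0 => w | 1 => d1 | 2 => biprod.lift (δ 3) 0 | j + 3 => δ (j + 4),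
      Iso.refl W, ?_, ?_, ?_⟩
    · rw [yoneda_exact_iff]
      intro T t
      simp only [Iso.refl_hom, Category.comp_id]
      constructor
      · intro ht
        exact hwfact T t ht
      · rintro ⟨s, rfl⟩
        rw [Category.assoc, hwh, comp_zero]
    · intro i hi
      rcases i with _ | _ | _ | j
      · -- exactness at K 2 ⊞ W
        rw [yoneda_exact_iff]
        intro T t
        constructor
        · intro ht
          obtain ⟨a, b, rfl⟩ : ∃ a b, t = biprod.lift a b :=
            ⟨t ≫ biprod.fst, t ≫ biprod.snd, by apply biprod.hom_ext <;> simp⟩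
          rw [hwcomp] at ht
          obtain ⟨hcu, hcσ⟩ := key1 _ _ _ ht
          obtain ⟨p, hp0⟩ := (hE 1 (by omega) _ _).1 hcσ
          have hp : p ≫ δ 2 = a + (b ≫ v - a ≫ δ 1) ≫ σ := hp0
          refine ⟨biprod.lift p (b ≫ v - a ≫ δ 1), ?_⟩
          rw [hd1comp]
          apply biprod.hom_ext
          · rw [biprod.lift_fst, biprod.lift_fst, hp]
            abel
          · rw [biprod.lift_snd, biprod.lift_snd, hcu]
        · rintro ⟨s, rfl⟩
          rw [Category.assoc, hd1w, comp_zero]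
      · -- exactness at K 3 ⊞ K 1
        rw [yoneda_exact_iff]
        intro T t
        have hδ32 : δ 3 ≫ δ 2 = 0 := (hE 2 (by omega) _ (δ 3)).2 ⟨𝟙 _, Category.id_comp _⟩
        have hl30 : (biprod.lift (δ 3) 0 : K 4 ⟶ K 3 ⊞ K 1) ≫ d1 = 0 := by
          rw [hd1comp, hδ32]
          apply biprod.hom_ext <;> simp
        constructor
        · intro ht
          obtain ⟨a, b, rfl⟩ : ∃ a b, t = biprod.lift a b :=
            ⟨t ≫ biprod.fst, t ≫ biprod.snd, by apply biprod.hom_ext <;> simp⟩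
          obtain ⟨hb0, ha2⟩ := hd1ker T a b ht
          obtain ⟨p, hp0⟩ := (hE 2 (by omega) _ _).1 ha2
          have hp : p ≫ δ 3 = a := hp0
          refine ⟨p, ?_⟩
          apply biprod.hom_ext <;> simp [hp, hb0]
        · rintro ⟨s, rfl⟩
          rw [Category.assoc, hl30, comp_zero]
      · -- exactness at K 4
        rw [yoneda_exact_iff]
        intro T t
        have hδ43 : δ 4 ≫ δ 3 = 0 := (hE 3 (by omega) _ (δ 4)).2 ⟨𝟙 _, Category.id_comp _⟩
        have hl43 : δ 4 ≫ biprod.lift (δ 3) (0 : K 4 ⟶ K 1) = 0 := by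
          apply biprod.hom_ext <;> simp [hδ43]
        constructor
        · intro ht
          have ht3 : t ≫ δ 3 = 0 := by
            have := congrArg (fun z => z ≫ biprod.fst) ht
            simpa using this
          exact (hE 3 (by omega) _ _).1 ht3
        · rintro ⟨s, rfl⟩
          rw [Category.assoc, hl43, comp_zero]
      · -- exactness high up
        exact hE' (j + 4) (by omega)
    · -- injectivity at the top
      rcases n3 with _ | _ | n5
      · rw [yoneda_inj_iff]
        intro T t ht
        have ht' : t ≫ d1 = 0 := ht
        obtain ⟨a, b, rfl⟩ : ∃ a b, t = biprod.lift a b :=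
          ⟨t ≫ biprod.fst, t ≫ biprod.snd, by apply biprod.hom_ext <;> simp⟩
        obtain ⟨hb0, ha2⟩ := hd1ker T a b ht'
        have ha0 : a = 0 := hInj _ _ ha2
        rw [ha0, hb0]
        apply biprod.hom_ext <;> simp
      · rw [yoneda_inj_iff]
        intro T t ht
        have ht' : t ≫ biprod.lift (δ 3) 0 = 0 := ht
        have ht3 : t ≫ δ 3 = 0 := by
          have := congrArg (fun z => z ≫ biprod.fst) ht'
          simpa using this
        exact hInj _ _ ht3
      · exact hInj'

end Aux

theorem stmt11 {C : Type u} [Category.{v} C] [Preadditive C]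
    [HasZeroObject C] [HasBinaryBiproducts C] [IsIdempotentComplete C]
    (n m : ℕ) (hm1 : 1 ≤ m) (hmn : m ≤ n) (X : ℕ → C) (d : ∀ i, X (i + 1) ⟶ X i)
    (hker : HasNKernel n (d 0))
    (hweak : ∀ j, j + 2 ≤ m → IsWeakKernel (d (j + 1)) (d j)) :
    HasNKernel (n + 1 - m) (d (m - 1)) := by
  have main : ∀ m', 1 ≤ m' → m' ≤ m → m' ≤ n → HasNKernel (n + 1 - m') (d (m' - 1)) := by
    intro m'
    induction m' with
    | zero => omega
    | succ k ih =>
      intro _ hkm hkn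
      rcases k with _ | k'
      · simpa using hker
      · have prev := ih (by omega) (by omega) (by omega)
        have hwk := hweak k' (by omega)
        have hn2 : n + 1 - (k' + 1) = (n - k' - 2) + 2 := by omega
        rw [hn2] at prev
        have hstep := step (n - k' - 2) prev hwk
        have hn3 : n + 1 - (k' + 2) = (n - k' - 2) + 1 := by omega
        rw [hn3]
        exact hstep
  exact main m hm1 le_rfl hmn
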